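/- Let D be a bounded smooth domain in R^3, ρ > 0 a continuous function on the closure of D, and φ a C² function solving Δφ + e^{-φ} = ρ in D with φ = 0 on ∂D. Then for all x in D, min{0, -ln(max_D ρ)} ≤ φ(x) ≤ max{0, -ln(min_D ρ)}. -/

import Mathlib

open Real

noncomputable section

abbrev E3 := EuclideanSpace ℝ (Fin 3)

/-- Spatial partial derivative `∂_i` of a function on `ℝ³`. -/
def pds (i : Fin 3) (f : E3 → ℝ) : E3 → ℝ :=
  fun x => fderiv ℝ f x (EuclideanSpace.single i 1)

/-- Laplacian `Δ f = Σ_i ∂_i ∂_i f` on `ℝ³`. -/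
def lapS (f : E3 → ℝ) : E3 → ℝ :=
  fun x => ∑ i : Fin 3, pds i (pds i f) x

lemma pds_neg (i : Fin 3) (f : E3 → ℝ) :
    pds i (fun y => -f y) = fun y => -(pds i f y) := by
  funext x
  simp [pds, fderiv_neg]

lemma lapS_neg (f : E3 → ℝ) (x : E3) : lapS (fun y => -f y) x = -lapS f x := by
  unfold lapS
  rw [← Finset.sum_neg_distrib]
  refine Finset.sum_congr rfl fun i _ => ?_
  rw [pds_neg, pds_neg]

/-- 1D second-derivative test at a local maximum. -/
lemma deriv2_nonpos_of_isLocalMax {g : ℝ → ℝ}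
    (hg : ∀ᶠ t in nhds (0:ℝ), DifferentiableAt ℝ g t)
    (hmax : IsLocalMax g 0)
    (hd : DifferentiableAt ℝ (deriv g) 0) :
    deriv (deriv g) 0 ≤ 0 := by
  by_contra hpos
  push_neg at hpos
  have h0 : deriv g 0 = 0 := hmax.deriv_eq_zero
  have hslope : ∀ᶠ t in nhdsWithin (0:ℝ) {(0:ℝ)}ᶜ, 0 < slope (deriv g) 0 t := by
    have ht := hasDerivAt_iff_tendsto_slope.mp hd.hasDerivAt
    exact ht.eventually (eventually_gt_nhds hpos)
  have hslope' : ∀ᶠ t in nhds (0:ℝ), t ≠ 0 → 0 < slope (deriv g) 0 t := by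
    simpa [eventually_nhdsWithin_iff] using hslope
  have hall := (hg.and (hmax.and hslope'))
  rw [Metric.eventually_nhds_iff] at hall
  obtain ⟨δ, hδ, hP⟩ := hall
  set a := δ/2 with ha
  have ha0 : 0 < a := by positivity
  have hmem : ∀ t ∈ Set.Icc 0 a, dist t (0:ℝ) < δ := by
    intro t ht
    rw [Real.dist_eq, sub_zero, abs_of_nonneg ht.1]
    calc t ≤ a := ht.2
    _ < δ := by rw [ha]; linarith
  have hcont : ContinuousOn g (Set.Icc 0 a) := fun t ht =>
    ((hP (hmem t ht)).1.continuousAt).continuousWithinAt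
  have hder : ∀ t ∈ interior (Set.Icc 0 a), 0 < deriv g t := by
    intro t ht
    rw [interior_Icc] at ht
    have htδ : dist t (0:ℝ) < δ := hmem t ⟨ht.1.le, ht.2.le⟩
    have hs := (hP htδ).2.2 (ne_of_gt ht.1)
    rw [slope_def_field, h0, sub_zero, sub_zero] at hs
    have := mul_pos hs ht.1
    rwa [div_mul_cancel₀ _ (ne_of_gt ht.1)] at this
  have hmono : StrictMonoOn g (Set.Icc 0 a) :=
    strictMonoOn_of_deriv_pos (convex_Icc 0 a) hcont hder
  have hlt : g 0 < g a :=
    hmono (Set.left_mem_Icc.mpr ha0.le) (Set.right_mem_Icc.mpr ha0.le) ha0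
  have hle : g a ≤ g 0 := by
    have hda : dist a (0:ℝ) < δ := by
      rw [Real.dist_eq, sub_zero, abs_of_pos ha0, ha]; linarith
    simpa using (hP hda).2.1
  exact absurd hlt (not_lt.mpr hle)

/-- At an interior local maximum of a `C²` function, the Laplacian is nonpositive. -/
lemma lapS_nonpos_at_localMax {D : Set E3} (hopen : IsOpen D) {φ : E3 → ℝ}
    (hφC2 : ContDiffOn ℝ 2 φ D) {x₀ : E3} (hx₀ : x₀ ∈ D)
    (hmax : IsLocalMax φ x₀) : lapS φ x₀ ≤ 0 := by
  have hD : D ∈ nhds x₀ := hopen.mem_nhds hx₀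
  have hφdiff : DifferentiableOn ℝ φ D := hφC2.differentiableOn (by norm_num)
  have hf' : DifferentiableOn ℝ (fun y => fderiv ℝ φ y) D :=
    (hφC2.fderiv_of_isOpen hopen (m := 1) (by norm_num)).differentiableOn one_ne_zero
  have key : ∀ i : Fin 3, pds i (pds i φ) x₀ ≤ 0 := by
    intro i
    set v : E3 := EuclideanSpace.single i 1 with hv
    set c : ℝ → E3 := fun t => x₀ + t • v with hc
    have hc0 : c 0 = x₀ := by simp [hc]
    have hcd : ∀ t : ℝ, HasDerivAt c v t := by
      intro t
      have : HasDerivAt (fun t : ℝ => t • v) ((1:ℝ) • v) t :=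
        (hasDerivAt_id t).smul_const v
      simpa [hc] using this.const_add x₀
    have hccont : Continuous c := by
      fun_prop
    have htend : Filter.Tendsto c (nhds 0) (nhds x₀) := by
      rw [← hc0]; exact hccont.continuousAt
    have hUev : ∀ᶠ t in nhds (0:ℝ), c t ∈ D := htend.eventually_mem hD
    set g : ℝ → ℝ := fun t => φ (c t) with hg
    -- g has derivative pds i φ (c t) wherever c t ∈ D
    have hgd : ∀ t : ℝ, c t ∈ D → HasDerivAt g (pds i φ (c t)) t := by
      intro t ht
      have h1 : DifferentiableAt ℝ φ (c t) :=
        (hφdiff (c t) ht).differentiableAt (hopen.mem_nhds ht)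
      exact h1.hasFDerivAt.comp_hasDerivAt t (hcd t)
    have hgdiff : ∀ᶠ t in nhds (0:ℝ), DifferentiableAt ℝ g t :=
      hUev.mono fun t ht => (hgd t ht).differentiableAt
    have hderiv_eq : deriv g =ᶠ[nhds (0:ℝ)] fun t => pds i φ (c t) :=
      hUev.mono fun t ht => (hgd t ht).deriv
    -- differentiability of pds i φ at x₀
    have hF : DifferentiableAt ℝ (fun y => fderiv ℝ φ y) x₀ :=
      (hf' x₀ hx₀).differentiableAt hD
    have hP : DifferentiableAt ℝ (pds i φ) x₀ := by
      have := (ContinuousLinearMap.apply ℝ ℝ v).differentiableAt.comp x₀ hF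
      exact this
    have hF2 : HasDerivAt (fun t => pds i φ (c t)) (fderiv ℝ (pds i φ) x₀ v) 0 := by
      have h1 : HasFDerivAt (pds i φ) (fderiv ℝ (pds i φ) x₀) (c 0) := by
        rw [hc0]; exact hP.hasFDerivAt
      exact h1.comp_hasDerivAt 0 (hcd 0)
    have hdg : HasDerivAt (deriv g) (fderiv ℝ (pds i φ) x₀ v) 0 :=
      hF2.congr_of_eventuallyEq hderiv_eq
    have hgmax : IsLocalMax g 0 := by
      have := htend.eventually hmax
      simpa [IsLocalMax, IsMaxFilter, hg, hc0] using this
    have := deriv2_nonpos_of_isLocalMax hgdiff hgmax hdg.differentiableAt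
    rw [hdg.deriv] at this
    exact this
  exact Finset.sum_nonpos fun i _ => key i

/-- maximum-principle bounds for a solution of `Δφ + e^{-φ} = ρ` in a
bounded smooth domain `D` with `φ = 0` on `∂D`:
`min{0, -ln(max_D̄ ρ)} ≤ φ(x) ≤ max{0, -ln(min_D̄ ρ)}` for all `x ∈ D`. -/
theorem poisson_maximum_principle
    (D : Set E3) (hopen : IsOpen D) (hbd : Bornology.IsBounded D)
    (ρ φ : E3 → ℝ)
    (hρ : ContinuousOn ρ (closure D))
    (hρpos : ∀ x ∈ closure D, 0 < ρ x)
    (hφcont : ContinuousOn φ (closure D))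
    (hφC2 : ContDiffOn ℝ 2 φ D)
    (hPDE : ∀ x ∈ D, lapS φ x + Real.exp (-φ x) = ρ x)
    (hbc : ∀ x ∈ frontier D, φ x = 0) :
    ∀ x ∈ D,
      min 0 (-Real.log (sSup (ρ '' closure D))) ≤ φ x ∧
      φ x ≤ max 0 (-Real.log (sInf (ρ '' closure D))) := by
  intro x hx
  have hK : IsCompact (closure D) := hbd.isCompact_closure
  have hxK : x ∈ closure D := subset_closure hx
  have hne : (closure D).Nonempty := ⟨x, hxK⟩
  set S : Set ℝ := ρ '' closure D with hS
  have hSc : IsCompact S := hK.image_of_continuousOn hρ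
  have hSne : S.Nonempty := hne.image ρ
  have hInf_mem : sInf S ∈ S := hSc.sInf_mem hSne
  have hSup_mem : sSup S ∈ S := hSc.sSup_mem hSne
  have hInf_pos : 0 < sInf S := by
    obtain ⟨y, hy, hyeq⟩ := hInf_mem
    rw [← hyeq]; exact hρpos y hy
  have hSup_pos : 0 < sSup S := by
    obtain ⟨y, hy, hyeq⟩ := hSup_mem
    rw [← hyeq]; exact hρpos y hy
  constructor
  · -- lower bound via minimum point
    obtain ⟨x₁, hx₁K, hmin⟩ := hK.exists_isMinOn hne hφcont
    have hxbd : φ x₁ ≤ φ x := hmin hxK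
    refine le_trans ?_ hxbd
    by_cases hx₁D : x₁ ∈ D
    · -- interior minimum
      have hloc : IsLocalMax (fun y => -φ y) x₁ := by
        have : ∀ᶠ y in nhds x₁, φ x₁ ≤ φ y :=
          Filter.eventually_of_mem (hopen.mem_nhds hx₁D) fun y hy => hmin (subset_closure hy)
        exact this.mono fun y hy => neg_le_neg hy
      have hlap : lapS (fun y => -φ y) x₁ ≤ 0 :=
        lapS_nonpos_at_localMax hopen hφC2.neg hx₁D hloc
      rw [lapS_neg] at hlap
      have hlap' : 0 ≤ lapS φ x₁ := by linarith
      have hpde := hPDE x₁ hx₁D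
      have hexp : Real.exp (-φ x₁) ≤ ρ x₁ := by linarith
      have hρle : ρ x₁ ≤ sSup S := le_csSup hSc.bddAbove ⟨x₁, hx₁K, rfl⟩
      have : Real.exp (-φ x₁) ≤ sSup S := le_trans hexp hρle
      have hlog : -φ x₁ ≤ Real.log (sSup S) := by
        have := Real.log_le_log (Real.exp_pos _) this
        rwa [Real.log_exp] at this
      have : -Real.log (sSup S) ≤ φ x₁ := by linarith
      exact le_trans (min_le_right _ _) this
    · -- boundary minimum
      have hfr : x₁ ∈ frontier D := by
        rw [frontier, hopen.interior_eq]
        exact ⟨hx₁K, hx₁D⟩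
      rw [hbc x₁ hfr]
      exact min_le_left _ _
  · -- upper bound via maximum point
    obtain ⟨x₀, hx₀K, hmax⟩ := hK.exists_isMaxOn hne hφcont
    have hxbd : φ x ≤ φ x₀ := hmax hxK
    refine le_trans hxbd ?_
    by_cases hx₀D : x₀ ∈ D
    · have hloc : IsLocalMax φ x₀ :=
        Filter.eventually_of_mem (hopen.mem_nhds hx₀D) fun y hy => hmax (subset_closure hy)
      have hlap : lapS φ x₀ ≤ 0 := lapS_nonpos_at_localMax hopen hφC2 hx₀D hloc
      have hpde := hPDE x₀ hx₀D
      have hexp : ρ x₀ ≤ Real.exp (-φ x₀) := by linarith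
      have hρge : sInf S ≤ ρ x₀ := csInf_le hSc.bddBelow ⟨x₀, hx₀K, rfl⟩
      have hle : sInf S ≤ Real.exp (-φ x₀) := le_trans hρge hexp
      have hlog : Real.log (sInf S) ≤ -φ x₀ := by
        have := Real.log_le_log hInf_pos hle
        rwa [Real.log_exp] at this
      have : φ x₀ ≤ -Real.log (sInf S) := by linarith
      exact le_trans this (le_max_right _ _)
    · have hfr : x₀ ∈ frontier D := by
        rw [frontier, hopen.interior_eq]
        exact ⟨hx₀K, hx₀D⟩
      rw [hbc x₀ hfr]
      exact le_max_left _ _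

end
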